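/- Let f : ℝⁿ → ℝ ∪ {+∞} be a proper lower semicontinuous convex function with f(0) = 0 whose subgradient mapping ∂f has a graph that is a linear subspace of ℝⁿ × ℝⁿ. Then the domain S = dom ∂f is a linear subspace, S⊥ = ∂f(0), and there exists a symmetric positive semidefinite linear operator M : ℝⁿ → ℝⁿ with range contained in S such that f(x) = ½⟨M x, x⟩ + δ_S(x) for all x ∈ ℝⁿ, where δ_S is the indicator function of S. -/

import Mathlib

/- STATEMENT 0: generalized-linear subgradient mapping of a proper lsc convex
function with f(0)=0 yields a generalized quadratic representation
f(x) = ½⟨M x, x⟩ + δ_S(x), with S = dom ∂f a linear subspace and S⊥ = ∂f(0). -/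

open scoped RealInnerProductSpace
open Filter Topology Classical

noncomputable section

/-- The convex-analysis subdifferential of an extended-real-valued function. -/
def Subdiff {n : ℕ} (f : EuclideanSpace ℝ (Fin n) → EReal) (x : EuclideanSpace ℝ (Fin n)) :
    Set (EuclideanSpace ℝ (Fin n)) :=
  {v | ∀ y, f x + ((⟪v, y - x⟫ : ℝ) : EReal) ≤ f y}

/-- Properness: never `⊥` and somewhere finite. -/
def ProperFn {n : ℕ} (f : EuclideanSpace ℝ (Fin n) → EReal) : Prop :=
  (∀ x, f x ≠ ⊥) ∧ ∃ x, f x ≠ ⊤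

/-- Convexity of an extended-real-valued function. -/
def ConvexFn {n : ℕ} (f : EuclideanSpace ℝ (Fin n) → EReal) : Prop :=
  ∀ x y : EuclideanSpace ℝ (Fin n), ∀ a b : ℝ, 0 ≤ a → 0 ≤ b → a + b = 1 →
    f (a • x + b • y) ≤ (a : EReal) * f x + (b : EReal) * f y

/-- If `0 ≤ t*d + t^2*c` for all real `t`, with `c ≥ 0`, then `d = 0`. -/
lemma aux_quad_zero {c d : ℝ} (hc : 0 ≤ c) (h : ∀ t : ℝ, 0 ≤ t * d + t ^ 2 * c) : d = 0 := by
  have key : ∀ ε : ℝ, 0 < ε → |d| ≤ ε * c := by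
    intro ε hε
    have h1 := h ε
    have h2 := h (-ε)
    rw [abs_le]
    constructor <;> nlinarith
  by_contra hd
  rcases eq_or_lt_of_le hc with hc0 | hc0
  · have := key 1 one_pos
    rw [← hc0] at this
    simp at this
    exact hd this
  · have hdp : 0 < |d| := abs_pos.mpr hd
    have := key (|d| / (2 * c)) (by positivity)
    rw [div_mul_eq_mul_div] at this
    have h2 : |d| * c / (2 * c) = |d| / 2 := by
      field_simp
    rw [h2] at this
    linarith

/-- A real function with "subgradient" `c*t` at each `t` and value `0` at `0`
equals `c*t^2/2`. -/
lemma aux_quad_line {c : ℝ} {g : ℝ → ℝ} (hg0 : g 0 = 0)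
    (hsub : ∀ s t : ℝ, g t + t * (s - t) * c ≤ g s) : g 1 = c / 2 := by
  have hc : 0 ≤ c := by
    have h1 := hsub 1 0
    have h2 := hsub 0 1
    simp [hg0] at h1 h2; linarith
  set ψ : ℝ → ℝ := fun t => g t - c * t ^ 2 / 2 with hψ
  have hbound : ∀ s t : ℝ, |ψ s - ψ t| ≤ c / 2 * (s - t) ^ 2 := by
    intro s t
    have h1 := hsub s t
    have h2 := hsub t s
    rw [abs_le]
    constructor <;> simp only [hψ] <;> nlinarith [sq_nonneg (s - t)]
  have hderiv : ∀ t : ℝ, HasDerivAt ψ 0 t := by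
    intro t
    rw [hasDerivAt_iff_isLittleO, Asymptotics.isLittleO_iff]
    intro ε hε
    have hev : ∀ᶠ s in 𝓝 t, |s - t| < 2 * ε / (c + 1) :=
      eventually_abs_sub_lt t (by positivity)
    filter_upwards [hev] with s hs
    simp only [smul_zero, sub_zero]
    have h1 := hbound s t
    have h2 : c / 2 * (s - t) ^ 2 ≤ ε * |s - t| := by
      have habs : 0 ≤ |s - t| := abs_nonneg _
      have he : (s - t) ^ 2 = |s - t| * |s - t| := by rw [abs_mul_abs_self]; ring
      rw [he]
      calc c / 2 * (|s - t| * |s - t|) ≤ c / 2 * (2 * ε / (c + 1) * |s - t|) := by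
            apply mul_le_mul_of_nonneg_left _ (by positivity)
            exact mul_le_mul_of_nonneg_right hs.le habs
        _ = ε * |s - t| * (c / (c + 1)) := by ring
        _ ≤ ε * |s - t| * 1 := by
            apply mul_le_mul_of_nonneg_left _ (by positivity)
            rw [div_le_one (by positivity)]; linarith
        _ = ε * |s - t| := by ring
    calc ‖ψ s - ψ t‖ = |ψ s - ψ t| := rfl
      _ ≤ c / 2 * (s - t) ^ 2 := h1
      _ ≤ ε * |s - t| := h2
      _ = ε * ‖s - t‖ := rfl
  have hconst := is_const_of_deriv_eq_zero (fun t => (hderiv t).differentiableAt)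
    (fun t => (hderiv t).deriv) 1 0
  simp only [hψ, hg0] at hconst
  linarith [hconst]

/-- A nonnegative lsc EReal-valued function attains its min on a compact set. -/
lemma aux_lsc_min {X : Type*} [TopologicalSpace X] {h : X → EReal} (hlsc : LowerSemicontinuous h)
    {B : Set X} (hB : IsCompact B) (hBc : IsClosed B) {z : X} (hz : z ∈ B) (hfin : h z ≠ ⊤)
    (hnn : ∀ y, (0:EReal) ≤ h y) : ∃ p ∈ B, ∀ y ∈ B, h p ≤ h y := by
  classical
  set m : EReal := sInf (h '' B) with hmdef
  have hmle : m ≤ h z := sInf_le (Set.mem_image_of_mem h hz)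
  have hm0 : (0:EReal) ≤ m := le_sInf (by rintro a ⟨y, -, rfl⟩; exact hnn y)
  have hmtop : m ≠ ⊤ := fun hm => hfin (top_le_iff.mp (hm ▸ hmle))
  have hmbot : m ≠ ⊥ := fun hm => by simp [hm] at hm0
  set mr : ℝ := m.toReal with hmr
  have hm : m = (mr : EReal) := (EReal.coe_toReal hmtop hmbot).symm
  set K : ℕ → Set X := fun i => B ∩ {y | h y ≤ ((mr + 1 / (i + 1) : ℝ) : EReal)} with hK
  have hKcl : ∀ i, IsClosed (K i) := fun i => hBc.inter (hlsc.isClosed_preimage _)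
  have hKne : ∀ i, (K i).Nonempty := by
    intro i
    have hlt : m < ((mr + 1 / (i + 1) : ℝ) : EReal) := by
      rw [hm, EReal.coe_lt_coe_iff]
      have : (0:ℝ) < 1 / (i + 1) := by positivity
      linarith
    obtain ⟨a, ⟨y, hyB, rfl⟩, ha⟩ := sInf_lt_iff.mp hlt
    exact ⟨y, hyB, ha.le⟩
  have hKmono : ∀ i, K (i + 1) ⊆ K i := by
    intro i
    apply Set.inter_subset_inter_right
    intro y hy
    have hstep : ((mr + 1 / (↑(i+1) + 1) : ℝ) : EReal) ≤ ((mr + 1 / (↑i + 1) : ℝ) : EReal) := by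
      rw [EReal.coe_le_coe_iff]
      have : (1:ℝ) / (↑(i+1) + 1) ≤ 1 / (↑i + 1) := by
        apply one_div_le_one_div_of_le
        · positivity
        · push_cast; linarith
      linarith
    exact le_trans hy hstep
  obtain ⟨p, hp⟩ := IsCompact.nonempty_iInter_of_sequence_nonempty_isCompact_isClosed K
    hKmono hKne (hB.of_isClosed_subset (hKcl 0) Set.inter_subset_left) hKcl
  simp only [Set.mem_iInter, hK, Set.mem_inter_iff, Set.mem_setOf_eq] at hp
  refine ⟨p, (hp 0).1, fun y hy => ?_⟩
  have hple : h p ≤ m := by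
    by_contra hlt
    push_neg at hlt
    rw [hm] at hlt
    have hp1 : h p ≤ ((mr + 1 : ℝ) : EReal) := by
      have := (hp 0).2
      simpa using this
    have hptop : h p ≠ ⊤ := fun hpt => by
      rw [hpt] at hp1
      exact absurd (top_le_iff.mp hp1) (EReal.coe_ne_top _)
    have hpbot : h p ≠ ⊥ := fun hpb => by simpa [hpb] using hnn p
    set pr : ℝ := (h p).toReal with hpr
    have hpe : h p = (pr : EReal) := (EReal.coe_toReal hptop hpbot).symm
    rw [hpe, EReal.coe_lt_coe_iff] at hlt
    obtain ⟨i, hi⟩ := exists_nat_one_div_lt (sub_pos.mpr hlt)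
    have := (hp i).2
    rw [hpe, EReal.coe_le_coe_iff] at this
    linarith
  exact le_trans hple (sInf_le (Set.mem_image_of_mem h hy))

set_option maxHeartbeats 1000000 in
theorem statement0 {n : ℕ} (f : EuclideanSpace ℝ (Fin n) → EReal)
    (hproper : ProperFn f) (hlsc : LowerSemicontinuous f) (hconv : ConvexFn f)
    (h0 : f 0 = 0)
    (hlin : ∃ G : Submodule ℝ (EuclideanSpace ℝ (Fin n) × EuclideanSpace ℝ (Fin n)),
      (G : Set (EuclideanSpace ℝ (Fin n) × EuclideanSpace ℝ (Fin n))) =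
        {p | p.2 ∈ Subdiff f p.1}) :
    ∃ S : Submodule ℝ (EuclideanSpace ℝ (Fin n)),
      (S : Set (EuclideanSpace ℝ (Fin n))) = {x | (Subdiff f x).Nonempty} ∧
      ((Sᗮ : Submodule ℝ (EuclideanSpace ℝ (Fin n))) : Set (EuclideanSpace ℝ (Fin n))) =
        Subdiff f 0 ∧
      ∃ M : EuclideanSpace ℝ (Fin n) →ₗ[ℝ] EuclideanSpace ℝ (Fin n),
        (∀ x y, ⟪M x, y⟫ = ⟪x, M y⟫) ∧
        (∀ x, 0 ≤ ⟪M x, x⟫) ∧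
        (∀ x, M x ∈ S) ∧
        (∀ x, f x = if x ∈ S then (((1 / 2 : ℝ) * ⟪M x, x⟫ : ℝ) : EReal) else ⊤) := by
  obtain ⟨G, hG⟩ := hlin
  have hmem : ∀ x v : EuclideanSpace ℝ (Fin n), (x, v) ∈ G ↔ v ∈ Subdiff f x := by
    intro x v
    have := Set.ext_iff.mp hG (x, v)
    simpa using this
  have hbot := hproper.1
  have hnn : ∀ y, (0 : EReal) ≤ f y := by
    have h0G : ((0, 0) : _ × _) ∈ G := G.zero_mem
    have hs := (hmem 0 0).1 h0G
    intro y
    have := hs y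
    simpa [h0] using this
  have hfintop : ∀ x v, v ∈ Subdiff f x → f x ≠ ⊤ := by
    intro x v hv htop
    have := hv 0
    rw [htop, h0, EReal.top_add_coe] at this
    simp at this
  have hfin : ∀ x v, v ∈ Subdiff f x → f x = (((f x).toReal : ℝ) : EReal) :=
    fun x v hv => (EReal.coe_toReal (hfintop x v hv) (hbot x)).symm
  have hsubreal : ∀ x v, v ∈ Subdiff f x → ∀ y, f y ≠ ⊤ →
      (f x).toReal + ⟪v, y - x⟫ ≤ (f y).toReal := by
    intro x v hv y hy
    have h1 := hv y
    rw [hfin x v hv, ← EReal.coe_toReal hy (hbot y), ← EReal.coe_add, EReal.coe_le_coe_iff] at h1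
    exact h1
  -- the function is the quadratic form `⟪v,x⟫/2` at points of the graph
  have hquadG : ∀ x v, (x, v) ∈ G → f x = ((⟪v, x⟫ / 2 : ℝ) : EReal) := by
    intro x v hxv
    have hline : ∀ t : ℝ, (t • v) ∈ Subdiff f (t • x) := by
      intro t
      have := G.smul_mem t hxv
      rw [Prod.smul_mk] at this
      exact (hmem _ _).1 this
    set g : ℝ → ℝ := fun t => (f (t • x)).toReal with hgdef
    have hg0 : g 0 = 0 := by simp [hgdef, zero_smul, h0]
    have hsub : ∀ s t : ℝ, g t + t * (s - t) * ⟪v, x⟫ ≤ g s := by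
      intro s t
      have h1 := hsubreal (t • x) (t • v) (hline t) (s • x) (hfintop _ _ (hline s))
      have h2 : ⟪t • v, s • x - t • x⟫ = t * ((s - t) * ⟪v, x⟫) := by
        rw [← sub_smul, real_inner_smul_left, real_inner_smul_right]
      rw [h2] at h1
      simp only [hgdef]
      linarith
    have hg1 := aux_quad_line hg0 hsub
    have hfx : f x = ((g 1 : ℝ) : EReal) := by
      have := hfin x v ((hmem x v).1 hxv)
      simpa [hgdef, one_smul] using this
    rw [hfx, hg1]
  -- the domain submodule
  set S : Submodule ℝ (EuclideanSpace ℝ (Fin n)) :=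
    G.map (LinearMap.fst ℝ _ _) with hSdef
  have hS : (S : Set (EuclideanSpace ℝ (Fin n))) = {x | (Subdiff f x).Nonempty} := by
    ext x
    simp only [hSdef, SetLike.mem_coe, Submodule.mem_map, Set.mem_setOf_eq]
    constructor
    · rintro ⟨⟨a, b⟩, hab, rfl⟩
      exact ⟨b, (hmem a b).1 hab⟩
    · rintro ⟨v, hv⟩
      exact ⟨(x, v), (hmem x v).2 hv, rfl⟩
  -- points with finite value belong to S (proximal-point argument)
  have hdom : ∀ z, f z ≠ ⊤ → z ∈ S := by
    intro z hz
    set r : ℝ := (f z).toReal with hrdef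
    have hfz : f z = (r : EReal) := (EReal.coe_toReal hz (hbot z)).symm
    have hr0 : 0 ≤ r := by
      have := hnn z
      rw [hfz] at this
      exact_mod_cast this
    have hex : ∀ k : ℕ, ∃ p, p ∈ S ∧ ‖p - z‖ ^ 2 ≤ 2 * r / ((k : ℝ) + 1) := by
      intro k
      set κ : ℝ := (k : ℝ) + 1 with hκdef
      have hκ1 : (1:ℝ) ≤ κ := by
        rw [hκdef]
        have := Nat.cast_nonneg (α := ℝ) k
        linarith
      have hκ0 : (0:ℝ) < κ := by linarith
      set h : EuclideanSpace ℝ (Fin n) → EReal :=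
        fun y => f y + ((κ / 2 * ‖y - z‖ ^ 2 : ℝ) : EReal) with hhdef
      have hcont : Continuous fun y : EuclideanSpace ℝ (Fin n) =>
          ((κ / 2 * ‖y - z‖ ^ 2 : ℝ) : EReal) := by
        exact continuous_coe_real_ereal.comp
          (continuous_const.mul (((continuous_id.sub continuous_const).norm).pow 2))
      have hhlsc : LowerSemicontinuous h :=
        hlsc.add' hcont.lowerSemicontinuous
          (fun y => EReal.continuousAt_add (Or.inr (EReal.coe_ne_bot _))
            (Or.inr (EReal.coe_ne_top _)))
      have hhnn : ∀ y, (0:EReal) ≤ h y := by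
        intro y
        apply add_nonneg (hnn y)
        exact_mod_cast (by positivity : (0:ℝ) ≤ κ / 2 * ‖y - z‖ ^ 2)
      have hquadnn : ∀ y, (0:EReal) ≤ ((κ / 2 * ‖y - z‖ ^ 2 : ℝ) : EReal) := by
        intro y
        exact_mod_cast (by positivity : (0:ℝ) ≤ κ / 2 * ‖y - z‖ ^ 2)
      have hhz : h z = (r : EReal) := by
        simp only [hhdef, sub_self, norm_zero]
        norm_num
        exact hfz
      obtain ⟨p, hpB, hpmin⟩ := aux_lsc_min hhlsc (isCompact_closedBall z (2*r+2))
        Metric.isClosed_closedBall (Metric.mem_closedBall_self (by linarith)) (by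
          rw [hhz]; exact EReal.coe_ne_top r) hhnn
      -- p is a global minimizer
      have hglob : ∀ y, h p ≤ h y := by
        intro y
        by_cases hy : y ∈ Metric.closedBall z (2*r+2)
        · exact hpmin y hy
        · have hyd : 2*r+2 < ‖y - z‖ := by
            rw [Metric.mem_closedBall, not_le, dist_eq_norm] at hy
            exact hy
          have h1 : h p ≤ (r : EReal) := by rw [← hhz]; exact hpmin z (Metric.mem_closedBall_self (by linarith))
          have h2 : (r : EReal) ≤ ((κ / 2 * ‖y - z‖ ^ 2 : ℝ) : EReal) := by
            rw [EReal.coe_le_coe_iff]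
            nlinarith [mul_nonneg (by linarith : (0:ℝ) ≤ κ - 1) (sq_nonneg ‖y - z‖),
              sq_nonneg (‖y - z‖ - (2*r+2)), hr0]
          have h3 : ((κ / 2 * ‖y - z‖ ^ 2 : ℝ) : EReal) ≤ h y :=
            le_add_of_nonneg_left (hnn y)
          exact h1.trans (h2.trans h3)
      -- f p is finite
      have hfple : f p ≤ (r : EReal) := by
        calc f p ≤ h p := le_add_of_nonneg_right (hquadnn p)
          _ ≤ h z := hglob z
          _ = (r : EReal) := hhz
      have hfptop : f p ≠ ⊤ := fun ht => by
        rw [ht] at hfple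
        exact absurd (top_le_iff.mp hfple) (EReal.coe_ne_top _)
      set b : ℝ := (f p).toReal with hbdef
      have hfp : f p = (b : EReal) := (EReal.coe_toReal hfptop (hbot p)).symm
      have hb0 : 0 ≤ b := by
        have := hnn p
        rw [hfp] at this
        exact_mod_cast this
      -- the distance bound
      have hdist : b + κ / 2 * ‖p - z‖ ^ 2 ≤ r := by
        have := (hglob z).trans_eq hhz
        rw [hhdef] at this
        simp only at this
        rw [hfp, ← EReal.coe_add, EReal.coe_le_coe_iff] at this
        exact this
      have hdist2 : ‖p - z‖ ^ 2 ≤ 2 * r / κ := by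
        rw [le_div_iff₀ hκ0]
        nlinarith [hdist, hb0]
      -- the subgradient property
      have hw : (κ • (z - p)) ∈ Subdiff f p := by
        intro y
        by_cases hytop : f y = ⊤
        · rw [hytop]; exact le_top
        set a : ℝ := (f y).toReal with hadef
        have hfy : f y = (a : EReal) := (EReal.coe_toReal hytop (hbot y)).symm
        set A : ℝ := (a - b) + κ * ⟪p - z, y - p⟫ with hAdef
        set N : ℝ := ‖y - p‖ ^ 2 with hNdef
        have hN0 : 0 ≤ N := sq_nonneg _
        have key : ∀ t : ℝ, 0 < t → t ≤ 1 → 0 ≤ A + t * (κ / 2 * N) := by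
          intro t ht0 ht1
          set yt : EuclideanSpace ℝ (Fin n) := p + t • (y - p) with hytdef
          have hyt_eq : (1 - t) • p + t • y = yt := by
            simp only [hytdef]
            module
          have hcv := hconv p y (1 - t) t (by linarith) ht0.le (by ring)
          rw [hyt_eq, hfp, hfy, ← EReal.coe_mul, ← EReal.coe_mul, ← EReal.coe_add] at hcv
          have hmin := hglob yt
          have hchain : h p ≤ (((1 - t) * b + t * a + κ / 2 * ‖yt - z‖ ^ 2 : ℝ) : EReal) := by
            calc h p ≤ h yt := hmin
              _ = f yt + ((κ / 2 * ‖yt - z‖ ^ 2 : ℝ) : EReal) := by rw [hhdef]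
              _ ≤ (((1 - t) * b + t * a : ℝ) : EReal) + ((κ / 2 * ‖yt - z‖ ^ 2 : ℝ) : EReal) :=
                  add_le_add_left hcv _
              _ = (((1 - t) * b + t * a + κ / 2 * ‖yt - z‖ ^ 2 : ℝ) : EReal) := by
                  rw [← EReal.coe_add]
          rw [hhdef] at hchain
          simp only at hchain
          rw [hfp, ← EReal.coe_add, EReal.coe_le_coe_iff] at hchain
          have hexp : ‖yt - z‖ ^ 2 = ‖p - z‖ ^ 2 + 2 * t * ⟪p - z, y - p⟫ + t ^ 2 * N := by
            have he : yt - z = (p - z) + t • (y - p) := by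
              simp only [hytdef]; module
            rw [he, norm_add_sq_real, real_inner_smul_right, norm_smul]
            simp only [hNdef, Real.norm_eq_abs, mul_pow, sq_abs]
            ring
          rw [hexp] at hchain
          have hstep : 0 ≤ t * A + t ^ 2 * (κ / 2 * N) := by
            simp only [hAdef]
            linarith
          nlinarith [hstep, ht0, mul_pos ht0 ht0]
        have hA : 0 ≤ A := by
          have hfa : ∀ ε : ℝ, 0 < ε → -A ≤ ε := by
            intro ε hε
            set C : ℝ := κ / 2 * N with hCdef
            have hC0 : 0 ≤ C := by positivity
            set t : ℝ := min 1 (ε / (C + 1)) with htdef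
            have ht0 : 0 < t := lt_min one_pos (by positivity)
            have ht1 : t ≤ 1 := min_le_left _ _
            have htC : t * (C + 1) ≤ ε := by
              rw [← le_div_iff₀ (by positivity)]
              exact min_le_right _ _
            have hkt := key t ht0 ht1
            linarith
          have : -A ≤ 0 := le_of_forall_pos_le_add (by intro ε hε; simpa using hfa ε hε)
          linarith
        -- conclude
        rw [hfp, hfy]
        have hip : ⟪κ • (z - p), y - p⟫ = -(κ * ⟪p - z, y - p⟫) := by
          rw [real_inner_smul_left]
          rw [(neg_sub p z).symm, inner_neg_left]
          ring
        rw [hip, ← EReal.coe_add, EReal.coe_le_coe_iff]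
        simp only [hAdef] at hA
        linarith
      refine ⟨p, ?_, ?_⟩
      · have : p ∈ (S : Set (EuclideanSpace ℝ (Fin n))) := by
          rw [hS]
          exact ⟨_, hw⟩
        exact this
      · exact hdist2
    choose p hp1 hp2 using hex
    have htend : Tendsto p atTop (𝓝 z) := by
      rw [tendsto_iff_norm_sub_tendsto_zero]
      have hsq : Tendsto (fun k : ℕ => ‖p k - z‖ ^ 2) atTop (𝓝 0) := by
        apply squeeze_zero (fun k => sq_nonneg _) hp2
        have h2 := (tendsto_const_div_atTop_nhds_zero_nat (2*r)).comp (tendsto_add_atTop_nat 1)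
        have he : (fun k : ℕ => 2 * r / ((k:ℝ) + 1)) =
            (fun m : ℕ => 2 * r / (m:ℝ)) ∘ (fun k : ℕ => k + 1) := by
          funext k
          simp only [Function.comp_apply]
          push_cast
          ring_nf
        rw [he]
        exact h2
      have h3 := (Real.continuous_sqrt.tendsto 0).comp hsq
      rw [Real.sqrt_zero] at h3
      have he : (fun k : ℕ => ‖p k - z‖) =
          (fun x : ℝ => Real.sqrt x) ∘ (fun k : ℕ => ‖p k - z‖ ^ 2) := by
        funext k
        simp only [Function.comp_apply, Real.sqrt_sq (norm_nonneg _)]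
      rw [he]
      exact h3
    exact (S.closed_of_finiteDimensional).mem_of_tendsto htend
      (Filter.Eventually.of_forall hp1)
  -- characterization of the orthogonal complement
  have horth : ((Sᗮ : Submodule ℝ (EuclideanSpace ℝ (Fin n))) :
      Set (EuclideanSpace ℝ (Fin n))) = Subdiff f 0 := by
    ext v
    constructor
    · intro hv y
      by_cases hyt : f y = ⊤
      · rw [hyt]; exact le_top
      · have hyS : y ∈ S := hdom y hyt
        have hzero : ⟪v, y - (0 : EuclideanSpace ℝ (Fin n))⟫ = 0 := by
          rw [sub_zero, real_inner_comm]
          exact (Submodule.mem_orthogonal S v).mp hv y hyS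
        rw [h0, hzero]
        simpa using hnn y
    · intro hv
      have h0v : (0, v) ∈ G := (hmem 0 v).2 hv
      rw [SetLike.mem_coe, Submodule.mem_orthogonal]
      intro u hu
      have hu' : u ∈ (S : Set (EuclideanSpace ℝ (Fin n))) := hu
      rw [hS] at hu'
      obtain ⟨w, hw⟩ := hu'
      have hwG : (u, w) ∈ G := (hmem u w).2 hw
      have hsum : (u, w + v) ∈ G := by
        have := G.add_mem hwG h0v
        simpa using this
      have q1 := hquadG u w hwG
      have q2 := hquadG u (w + v) hsum
      rw [q1] at q2
      have q3 : ⟪w, u⟫ / 2 = ⟪w + v, u⟫ / 2 := by exact_mod_cast q2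
      rw [inner_add_left] at q3
      have hvu : ⟪v, u⟫ = 0 := by linarith
      rw [real_inner_comm]
      exact hvu
  -- the projection onto S
  set Pr : EuclideanSpace ℝ (Fin n) → EuclideanSpace ℝ (Fin n) :=
    fun x => ((S.orthogonalProjectionOnto x : EuclideanSpace ℝ (Fin n))) with hPrdef
  have hPrS : ∀ x, Pr x ∈ S := fun x => (S.orthogonalProjectionOnto x).2
  have hPr_self : ∀ x, x ∈ S → Pr x = x := fun x hx => Submodule.starProjection_eq_self_iff.mpr hx
  have hPr_add : ∀ x y, Pr (x + y) = Pr x + Pr y := by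
    intro x y
    simp only [hPrdef, map_add, Submodule.coe_add]
  have hPr_smul : ∀ (c : ℝ) x, Pr (c • x) = c • Pr x := by
    intro c x
    simp only [hPrdef, map_smul, Submodule.coe_smul]
  have hPr_orth : ∀ u, u ∈ S → ∀ y, ⟪u, y - Pr y⟫ = 0 := by
    intro u hu y
    have := Submodule.sub_starProjection_mem_orthogonal (K := S) y
    exact (Submodule.mem_orthogonal S _).mp this u hu
  -- choice of the linear operator
  have hchoice : ∀ x, ∃ v, (Pr x, v) ∈ G ∧ v ∈ S := by
    intro x
    have hx : Pr x ∈ S := hPrS x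
    rw [hSdef] at hx
    obtain ⟨⟨a, w⟩, hw, ha⟩ := Submodule.mem_map.mp hx
    simp only [LinearMap.fst_apply] at ha
    subst ha
    have hv' : w - Pr w ∈ Subdiff f 0 := by
      rw [← horth]
      exact Submodule.sub_starProjection_mem_orthogonal (K := S) w
    have h0w : (0, w - Pr w) ∈ G := (hmem _ _).2 hv'
    refine ⟨Pr w, ?_, hPrS w⟩
    have hsub := G.sub_mem hw h0w
    have he : ((Pr x, w) : _ × _) - (0, w - Pr w) = (Pr x, Pr w) := by
      ext <;> simp
    rwa [he] at hsub
  choose M0 hM0G hM0S using hchoice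
  have huniq : ∀ x v w, (x, v) ∈ G → (x, w) ∈ G → v ∈ S → w ∈ S → v = w := by
    intro x v w hv hw hvS hwS
    have hd : (0, v - w) ∈ G := by
      have hsub := G.sub_mem hv hw
      have he : ((x, v) : _ × _) - (x, w) = (0, v - w) := by ext <;> simp
      rwa [he] at hsub
    have hdo : v - w ∈ Sᗮ := by
      rw [← SetLike.mem_coe, horth]
      exact (hmem 0 (v - w)).1 hd
    have hzero : ⟪v - w, v - w⟫ = 0 :=
      (Submodule.mem_orthogonal S _).mp hdo (v - w) (S.sub_mem hvS hwS)
    have : v - w = 0 := by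
      rwa [inner_self_eq_zero] at hzero
    exact sub_eq_zero.mp this
  set M : EuclideanSpace ℝ (Fin n) →ₗ[ℝ] EuclideanSpace ℝ (Fin n) :=
    { toFun := M0
      map_add' := by
        intro x y
        apply huniq (Pr (x + y)) _ _ (hM0G (x + y)) _ (hM0S (x + y))
          (S.add_mem (hM0S x) (hM0S y))
        have := G.add_mem (hM0G x) (hM0G y)
        have he : ((Pr x, M0 x) : _ × _) + (Pr y, M0 y) = (Pr (x + y), M0 x + M0 y) := by
          rw [hPr_add]
          rfl
        rwa [he] at this
      map_smul' := by
        intro c x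
        simp only [RingHom.id_apply]
        apply huniq (Pr (c • x)) _ _ (hM0G (c • x)) _ (hM0S (c • x)) (S.smul_mem c (hM0S x))
        have := G.smul_mem c (hM0G x)
        have he : c • ((Pr x, M0 x) : _ × _) = (Pr (c • x), c • M0 x) := by
          rw [Prod.smul_mk, hPr_smul]
        rwa [he] at this } with hMdef
  have hMx : ∀ x, M x = M0 x := fun x => rfl
  have hMproj : ∀ x, M (Pr x) = M x := by
    intro x
    rw [hMx, hMx]
    apply huniq (Pr x) _ _ _ (hM0G x) (hM0S (Pr x)) (hM0S x)
    have := hM0G (Pr x)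
    rwa [hPr_self (Pr x) (hPrS x)] at this
  have hMG' : ∀ x, x ∈ S → (x, M x) ∈ G := by
    intro x hx
    have := hM0G x
    rwa [hPr_self x hx] at this
  have hquadM : ∀ x, x ∈ S → f x = ((⟪M x, x⟫ / 2 : ℝ) : EReal) :=
    fun x hx => hquadG x (M x) (hMG' x hx)
  have hposG : ∀ x v, (x, v) ∈ G → 0 ≤ ⟪v, x⟫ := by
    intro x v hxv
    have h1 := hnn x
    rw [hquadG x v hxv] at h1
    have : (0:ℝ) ≤ ⟪v, x⟫ / 2 := by exact_mod_cast h1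
    linarith
  -- symmetry on S
  have hsymS : ∀ x, x ∈ S → ∀ y, y ∈ S → ⟪M x, y⟫ = ⟪M y, x⟫ := by
    intro x hx y hy
    have hMyy : 0 ≤ ⟪M y, y⟫ := hposG y (M y) (hMG' y hy)
    have key : ∀ t : ℝ, 0 ≤ t * (⟪M y, x⟫ - ⟪M x, y⟫) + t ^ 2 * ⟪M y, y⟫ := by
      intro t
      have hxty : x + t • y ∈ S := S.add_mem hx (S.smul_mem t hy)
      have hft : f (x + t • y) ≠ ⊤ := by
        rw [hquadM _ hxty]
        exact EReal.coe_ne_top _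
      have h1 := hsubreal x (M x) ((hmem x (M x)).1 (hMG' x hx)) (x + t • y) hft
      have e1 : (f x).toReal = ⟪M x, x⟫ / 2 := by
        rw [hquadM x hx]
        simp
      have e2 : (f (x + t • y)).toReal = ⟪M (x + t • y), x + t • y⟫ / 2 := by
        rw [hquadM _ hxty]
        simp
      have e3 : ⟪M x, x + t • y - x⟫ = t * ⟪M x, y⟫ := by
        rw [add_sub_cancel_left, real_inner_smul_right]
      have e4 : ⟪M (x + t • y), x + t • y⟫ =
          ⟪M x, x⟫ + t * ⟪M x, y⟫ + t * ⟪M y, x⟫ + t ^ 2 * ⟪M y, y⟫ := by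
        rw [map_add, map_smul]
        rw [inner_add_left, inner_add_right, inner_add_right]
        rw [inner_smul_left, inner_smul_right, inner_smul_left, inner_smul_right]
        simp only [RCLike.ofReal_real_eq_id, id_eq, conj_trivial]
        ring
      rw [e1, e2, e3, e4] at h1
      nlinarith [h1]
    have := aux_quad_zero hMyy key
    linarith
  refine ⟨S, hS, horth, M, ?_, ?_, ?_, ?_⟩
  · -- symmetry
    intro x y
    have h1 : ⟪M x, y⟫ = ⟪M (Pr x), Pr y⟫ := by
      rw [hMproj]
      have : ⟪M x, y - Pr y⟫ = 0 := hPr_orth (M x) (hM0S x) y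
      have he : ⟪M x, y⟫ = ⟪M x, Pr y⟫ + ⟪M x, y - Pr y⟫ := by
        rw [← inner_add_right]
        congr 1
        abel
      rw [he, this, add_zero]
    have h2 : ⟪M y, x⟫ = ⟪M (Pr y), Pr x⟫ := by
      rw [hMproj]
      have : ⟪M y, x - Pr x⟫ = 0 := hPr_orth (M y) (hM0S y) x
      have he : ⟪M y, x⟫ = ⟪M y, Pr x⟫ + ⟪M y, x - Pr x⟫ := by
        rw [← inner_add_right]
        congr 1
        abel
      rw [he, this, add_zero]
    rw [h1, real_inner_comm (M y) x, h2]
    exact hsymS (Pr x) (hPrS x) (Pr y) (hPrS y)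
  · -- positivity
    intro x
    have h1 : ⟪M x, x⟫ = ⟪M (Pr x), Pr x⟫ := by
      rw [hMproj]
      have : ⟪M x, x - Pr x⟫ = 0 := hPr_orth (M x) (hM0S x) x
      have he : ⟪M x, x⟫ = ⟪M x, Pr x⟫ + ⟪M x, x - Pr x⟫ := by
        rw [← inner_add_right]
        congr 1
        abel
      rw [he, this, add_zero]
    rw [h1]
    exact hposG (Pr x) (M (Pr x)) (hMG' (Pr x) (hPrS x))
  · -- range in S
    intro x
    exact hM0S x
  · -- the quadratic formula
    intro x
    by_cases hx : x ∈ S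
    · rw [if_pos hx, hquadM x hx]
      congr 1
      ring
    · rw [if_neg hx]
      by_contra hne
      exact hx (hdom x hne)

end
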